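/- Let X be a pathwise connected Hausdorff space and let p ∈ X be a point at which X is first countable and locally pathwise connected. If R, S ∈ S_c(X) are such that lim R = p and lim S = p, then there exists a path in S_c(X) from R to S. -/
import Mathlib


open Set Topology unitInterval
open unitInterval

/-- The hyperspace of nonempty closed subsets of a topological space `X`. -/
structure CL (X : Type*) [TopologicalSpace X] : Type _ where
  carrier : Set X
  isClosed' : IsClosed carrier
  nonempty' : carrier.Nonempty

/-- The basic Vietoris set `⟨𝒰⟩` determined by a finite family `𝒰` of subsets of `X`:
all nonempty closed sets contained in `⋃ 𝒰` and meeting every member of `𝒰`. -/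
def CL.box {X : Type*} [TopologicalSpace X] (𝒰 : Finset (Set X)) : Set (CL X) :=
  {A | A.carrier ⊆ ⋃₀ (𝒰 : Set (Set X)) ∧ ∀ U ∈ 𝒰, (A.carrier ∩ U).Nonempty}

/-- The Vietoris topology on `CL X`, generated by the sets `⟨𝒰⟩` where `𝒰` ranges over
finite families of open subsets of `X`. -/
instance CL.instTopologicalSpace (X : Type*) [TopologicalSpace X] :
    TopologicalSpace (CL X) :=
  TopologicalSpace.generateFrom
    {s | ∃ 𝒰 : Finset (Set X), (∀ U ∈ 𝒰, IsOpen U) ∧ s = CL.box 𝒰}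

/-- `p` is the limit of the set `S`: `p ∈ S` and `S \ U` is finite for every open
set `U` containing `p`. -/
def IsLimitOf {X : Type*} [TopologicalSpace X] (S : Set X) (p : X) : Prop :=
  p ∈ S ∧ ∀ U : Set X, IsOpen U → p ∈ U → (S \ U).Finite

/-- `S` is a nontrivial convergent sequence in `X`: a countably infinite set having
a limit point belonging to it. -/
def IsNontrivialConvergentSeq {X : Type*} [TopologicalSpace X] (S : Set X) : Prop :=
  S.Countable ∧ S.Infinite ∧ ∃ p, IsLimitOf S p

/-- The hyperspace `S_c(X)` of nontrivial convergent sequences in `X`, as a subset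
of `CL X` (with the subspace Vietoris topology). -/
def Sc (X : Type*) [TopologicalSpace X] : Set (CL X) :=
  {A | IsNontrivialConvergentSeq A.carrier}

/-- Let `X` be a pathwise connected Hausdorff space and `p ∈ X` a point at which `X`
is first countable and locally pathwise connected (i.e. `p` has a neighborhood basis
of pathwise connected sets).  If `R, S ∈ S_c(X)` both have limit `p`, then there is a
path in `S_c(X)` from `R` to `S`. -/
lemma CL.ext' {X : Type*} [TopologicalSpace X] {A B : CL X}
    (h : A.carrier = B.carrier) : A = B := by
  cases A; cases B; simpa using h

lemma master_closed {X : Type*} [TopologicalSpace X] [T2Space X] {T E : Set X} {p : X}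
    (hT : IsClosed T) (hp : p ∈ T)
    (hE : ∀ W : Set X, IsOpen W → p ∈ W → (E \ W).Finite) : IsClosed (T ∪ E) := by
  rw [← isOpen_compl_iff, isOpen_iff_mem_nhds]
  intro x hx
  have hxT : x ∉ T := fun h => hx (Or.inl h)
  have hxE : x ∉ E := fun h => hx (Or.inr h)
  have hxp : x ≠ p := fun h => hxT (h ▸ hp)
  obtain ⟨U, W, hU, hW, hxU, hpW, hUW⟩ := t2_separation hxp
  have hopen : IsOpen (U ∩ Tᶜ ∩ (E \ W)ᶜ) :=
    (hU.inter hT.isOpen_compl).inter (hE W hW hpW).isClosed.isOpen_compl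
  refine Filter.mem_of_superset (hopen.mem_nhds ⟨⟨hxU, hxT⟩, fun h => hxE h.1⟩) ?_
  rintro z ⟨⟨hzU, hzT⟩, hzEW⟩ (hz | hz)
  · exact hzT hz
  · have hzW : z ∈ W := by by_contra h; exact hzEW ⟨hz, h⟩
    exact Set.disjoint_left.mp hUW hzU hzW

/-- Key lemma: a path in `Sc X` from `T` to `T ∪ Q`. -/
lemma aux_joined {X : Type*} [TopologicalSpace X] [T2Space X] [PathConnectedSpace X]
    (p : X) (hfc : (nhds p).IsCountablyGenerated)
    (hlpc : ∀ U ∈ nhds p, ∃ V ∈ nhds p, V ⊆ U ∧ IsPathConnected V)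
    (T : CL X) (hT : T ∈ Sc X) (hTp : IsLimitOf T.carrier p)
    (Q : Set X) (hQc : Q.Countable) (hQi : Q.Infinite) (hQp : IsLimitOf Q p)
    (TQ : CL X) (hTQ : TQ.carrier = T.carrier ∪ Q) :
    JoinedIn (Sc X) T TQ := by
  classical
  have hp : p ∈ T.carrier := hTp.1
  -- enumerate Q \ {p}
  set Q' : Set X := Q \ {p} with hQ'def
  have hQ'c : Q'.Countable := hQc.mono diff_subset
  have hQ'i : Q'.Infinite := hQi.diff (finite_singleton p)
  haveI := hQ'c.to_subtype
  haveI := hQ'i.to_subtype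
  obtain ⟨d⟩ := nonempty_denumerable ↥Q'
  set e : ℕ ≃ ↥Q' := (Denumerable.eqv ↥Q').symm with hedef
  set y : ℕ → X := fun k => (e k : X) with hydef
  have hy_inj : Function.Injective y := fun a b h => e.injective (Subtype.ext h)
  have hy_mem : ∀ k, y k ∈ Q' := fun k => (e k).2
  have hy_range : range y = Q' := by
    ext x; constructor
    · rintro ⟨k, rfl⟩; exact hy_mem k
    · intro hx; exact ⟨e.symm ⟨x, hx⟩, by simp [hydef]⟩
  -- antitone basis
  haveI := hfc
  obtain ⟨B, hB⟩ := (nhds p).exists_antitone_basis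
  -- path connected neighborhoods inside the basis
  have hBmem : ∀ m, B m ∈ nhds p := fun m => hB.toHasBasis.mem_of_mem trivial
  choose V hVnhds hVsub hVpc using fun m => hlpc (B m) (hBmem m)
  have hpV : ∀ m, p ∈ V m := fun m => mem_of_mem_nhds (hVnhds m)
  -- eventually y k ∈ V m
  have hyfin : ∀ m, {k | y k ∉ V m}.Finite := by
    intro m
    have h1 : IsOpen (interior (V m)) := isOpen_interior
    have h2 : p ∈ interior (V m) := mem_interior_iff_mem_nhds.mpr (hVnhds m)
    have h3 : (Q \ interior (V m)).Finite := hQp.2 _ h1 h2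
    have h4 : (y ⁻¹' (Q \ interior (V m))).Finite := h3.preimage hy_inj.injOn
    refine h4.subset fun k hk => ⟨(hy_mem k).1, fun hin => hk (interior_subset hin)⟩
  have hN : ∀ m, ∃ N, ∀ k, N ≤ k → y k ∈ V m := by
    intro m
    obtain ⟨b, hb⟩ := (hyfin m).bddAbove
    exact ⟨b + 1, fun k hk => by
      by_contra h
      exact absurd (hb (Set.mem_setOf.mpr h)) (by omega)⟩
  choose N hNspec using hN
  -- strictly monotone f with N m ≤ f m
  set f : ℕ → ℕ := fun m => Nat.rec (N 0) (fun m' ih => max (ih + 1) (N (m' + 1))) m with hfdef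
  have hf_succ : ∀ m, f m + 1 ≤ f (m + 1) := fun m => le_max_left _ _
  have hf_mono : StrictMono f := strictMono_nat_of_lt_succ fun m => hf_succ m
  have hfN : ∀ m, N m ≤ f m := by
    intro m; cases m with
    | zero => exact le_refl _
    | succ m' => exact le_max_right _ _
  have hf_ge : ∀ m, m ≤ f m := fun m => hf_mono.le_apply
  -- c k = largest m with f m ≤ k
  set c : ℕ → ℕ := fun k => sSup {m | f m ≤ k} with hcdef
  have hbdd : ∀ k, BddAbove {m | f m ≤ k} := fun k =>
    ⟨k, fun m hm => le_trans (hf_ge m) hm⟩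
  have hc_mem : ∀ k, f 0 ≤ k → f (c k) ≤ k := fun k hk =>
    Nat.sSup_mem (s := {m | f m ≤ k}) ⟨0, hk⟩ (hbdd k)
  have hc_ge : ∀ k M, f M ≤ k → M ≤ c k := fun k M hM => le_csSup (hbdd k) hM
  -- paths
  have hpaths : ∀ k : ℕ, ∃ γ : Path p (y k), f 0 ≤ k → ∀ s, γ s ∈ V (c k) := by
    intro k
    by_cases hk : f 0 ≤ k
    · have hyk : y k ∈ V (c k) := hNspec (c k) k (le_trans (hfN _) (hc_mem k hk))
      obtain ⟨γ, hγ⟩ := (hVpc (c k)).joinedIn p (hpV _) (y k) hyk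
      exact ⟨γ, fun _ => hγ⟩
    · exact ⟨(PathConnectedSpace.joined p (y k)).somePath, fun h => absurd h hk⟩
  choose γ hγ using hpaths
  -- eventually all of γ k lands in a given neighborhood of p
  have hγO : ∀ O : Set X, IsOpen O → p ∈ O → ∃ K, ∀ k, K ≤ k → ∀ s, γ k s ∈ O := by
    intro O hO hpO
    obtain ⟨M, -, hM⟩ := hB.toHasBasis.mem_iff.mp (hO.mem_nhds hpO)
    refine ⟨max (f 0) (f M), fun k hk s => ?_⟩
    have h1 : f 0 ≤ k := le_trans (le_max_left _ _) hk
    have h2 : M ≤ c k := hc_ge k M (le_trans (le_max_right _ _) hk)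
    exact hM (hB.antitone h2 (hVsub (c k) (hγ k h1 s)))
  -- the moving family
  set E : I → Set X := fun t => range (fun k => γ k t) with hEdef
  have hE_fin : ∀ t : I, ∀ W : Set X, IsOpen W → p ∈ W → (E t \ W).Finite := by
    intro t W hW hpW
    obtain ⟨K, hK⟩ := hγO W hW hpW
    refine ((Set.finite_Iio K).image (fun k => γ k t)).subset ?_
    rintro z ⟨⟨k, rfl⟩, hzW⟩
    refine ⟨k, ?_, rfl⟩
    rw [Set.mem_Iio]
    by_contra h
    exact hzW (hK k (by omega) t)
  have hE_cl : ∀ t : I, IsClosed (T.carrier ∪ E t) := fun t =>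
    master_closed T.isClosed' hp (hE_fin t)
  -- the path in CL X
  set F : I → CL X := fun t =>
    ⟨T.carrier ∪ E t, hE_cl t, ⟨p, Or.inl hp⟩⟩ with hFdef
  have hF_Sc : ∀ t, F t ∈ Sc X := by
    intro t
    refine ⟨hT.1.union (countable_range _), hT.2.1.mono subset_union_left,
      p, Or.inl hp, fun U hU hpU => ?_⟩
    rw [Set.union_diff_distrib]
    exact (hTp.2 U hU hpU).union (hE_fin t U hU hpU)
  have hF_cont : Continuous F := by
    show Continuous[inferInstance, TopologicalSpace.generateFrom
      {s | ∃ 𝒰 : Finset (Set X), (∀ U ∈ 𝒰, IsOpen U) ∧ s = CL.box 𝒰}] F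
    rw [continuous_generateFrom_iff]
    rintro s ⟨𝒰, h𝒰, rfl⟩
    rw [isOpen_iff_mem_nhds]
    intro t0 ht0
    set O : Set X := ⋃₀ (𝒰 : Set (Set X)) with hOdef
    have hO : IsOpen O := isOpen_sUnion fun U hU => h𝒰 U hU
    have hTO : T.carrier ⊆ O := fun x hx => ht0.1 (Or.inl hx)
    have hpO : p ∈ O := hTO hp
    obtain ⟨K, hK⟩ := hγO O hO hpO
    -- lower part: witnesses for each U ∈ 𝒰
    have hlow : ∀ U ∈ 𝒰, ∃ s : Set I, IsOpen s ∧ t0 ∈ s ∧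
        ∀ t ∈ s, ((F t).carrier ∩ U).Nonempty := by
      intro U hU
      obtain ⟨x, hxF, hxU⟩ := ht0.2 U hU
      rcases hxF with hx | ⟨k, rfl⟩
      · exact ⟨univ, isOpen_univ, mem_univ _, fun t _ => ⟨x, Or.inl hx, hxU⟩⟩
      · exact ⟨(fun t : I => γ k t) ⁻¹' U,
          (h𝒰 U hU).preimage (γ k).continuous, hxU,
          fun t ht => ⟨γ k t, Or.inr ⟨k, rfl⟩, ht⟩⟩
    choose! sU hsU_open hsU_mem hsU_prop using hlow
    set Nb : Set I := (⋂ k ∈ Finset.range K, (fun t : I => γ k t) ⁻¹' O) ∩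
      ⋂ U ∈ 𝒰, sU U with hNbdef
    have hNb_open : IsOpen Nb := by
      refine IsOpen.inter ?_ ?_
      · exact isOpen_biInter_finset fun k _ => hO.preimage (γ k).continuous
      · exact isOpen_biInter_finset fun U hU => hsU_open U hU
    have hNb_mem : t0 ∈ Nb := by
      constructor
      · refine Set.mem_biInter fun k _ => ?_
        exact ht0.1 (Or.inr ⟨k, rfl⟩)
      · exact Set.mem_biInter fun U hU => hsU_mem U hU
    refine Filter.mem_of_superset (hNb_open.mem_nhds hNb_mem) ?_
    intro t ht
    constructor
    · rintro x (hx | ⟨k, rfl⟩)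
      · exact hTO hx
      · by_cases hk : K ≤ k
        · exact hK k hk t
        · have := (Set.mem_iInter₂.mp ht.1) k (Finset.mem_range.mpr (by omega))
          exact this
    · intro U hU
      exact hsU_prop U hU t (Set.mem_iInter₂.mp ht.2 U hU)
  -- endpoints
  have hF0 : F 0 = T := by
    refine CL.ext' ?_
    show T.carrier ∪ E 0 = T.carrier
    have : E 0 = {p} := by
      apply Set.eq_singleton_iff_unique_mem.mpr
      exact ⟨⟨0, (γ 0).source⟩, by rintro x ⟨k, rfl⟩; exact (γ k).source⟩
    rw [this]
    exact union_eq_self_of_subset_right (singleton_subset_iff.mpr hp)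
  have hF1 : F 1 = TQ := by
    refine CL.ext' ?_
    show T.carrier ∪ E 1 = TQ.carrier
    have hE1 : E 1 = Q' := by
      have h1 : (fun k => γ k (1 : I)) = y := funext fun k => (γ k).target
      show range (fun k => γ k (1 : I)) = Q'
      rw [h1, hy_range]
    rw [hE1, hTQ, hQ'def]
    ext x
    simp only [mem_union, mem_diff, mem_singleton_iff]
    constructor
    · rintro (h | ⟨h, -⟩); exacts [Or.inl h, Or.inr h]
    · rintro (h | h)
      · exact Or.inl h
      · by_cases hxp : x = p
        · exact Or.inl (hxp ▸ hp)
        · exact Or.inr ⟨h, hxp⟩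
  exact ⟨{ toFun := F, continuous_toFun := hF_cont, source' := hF0, target' := hF1 },
    fun t => hF_Sc t⟩

theorem stmt_3 {X : Type*} [TopologicalSpace X] [T2Space X] [PathConnectedSpace X]
    (p : X) (hfc : (nhds p).IsCountablyGenerated)
    (hlpc : ∀ U ∈ nhds p, ∃ V ∈ nhds p, V ⊆ U ∧ IsPathConnected V)
    (R S : CL X) (hR : R ∈ Sc X) (hS : S ∈ Sc X)
    (hRp : IsLimitOf R.carrier p) (hSp : IsLimitOf S.carrier p) :
    JoinedIn (Sc X) R S := by
  set RS : CL X := ⟨R.carrier ∪ S.carrier, R.isClosed'.union S.isClosed',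
    R.nonempty'.mono subset_union_left⟩ with hRSdef
  have h1 : JoinedIn (Sc X) R RS :=
    aux_joined p hfc hlpc R hR hRp S.carrier hS.1 hS.2.1 hSp RS rfl
  have h2 : JoinedIn (Sc X) S RS :=
    aux_joined p hfc hlpc S hS hSp R.carrier hR.1 hR.2.1 hRp RS (union_comm _ _)
  exact h1.trans h2.symm
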